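/- Let m ≥ 1 and let sX, sY, t : Fin m → ℕ be positive with Σ_i t i = Σ_i sX i + Σ_i sY i, and let L = 2m + 3mP + Σ_i t i with P = Σ_i t i + Σ_i sX i + Σ_i sY i. If the constructed two-machine open shop instance admits a feasible no-idle/no-wait schedule with makespan at most L + 1, then the NMTS instance (sX, sY, t) has a solution, i.e. there exist bijections α, β : Fin m ≃ Fin m with sX(α i) + sY(β i) = t i for all i. -/

import Mathlib

/-- M1 processing times of the constructed instance: x-jobs (`j < m`) and y-jobs
(`m ≤ j < 2m`) take time 1, the t-job of index `i` takes time `t i + 3P`. -/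
def osA (m : ℕ) (t : Fin m → ℕ) (P : ℕ) : Fin (3 * m) → ℕ := fun j =>
  if _ : (j : ℕ) < 2 * m then 1 else t ⟨(j : ℕ) - 2 * m, by omega⟩ + 3 * P

/-- M2 processing times of the constructed instance: the x-job of index `i` takes
time `sX i + P`, the y-job of index `i` takes `sY i + 2P`, t-jobs take time 2. -/
def osB (m : ℕ) (sX sY : Fin m → ℕ) (P : ℕ) : Fin (3 * m) → ℕ := fun j =>
  if h1 : (j : ℕ) < m then sX ⟨(j : ℕ), h1⟩ + P
  else if _ : (j : ℕ) < 2 * m then sY ⟨(j : ℕ) - m, by omega⟩ + 2 * P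
  else 2

/-- Start time of job `j` on a machine with processing times `c`, processing order
`π` and machine start time `s`: the machine works contiguously (no idle time). -/
def startTime (N : ℕ) (c : Fin N → ℕ) (π : Fin N ≃ Fin N) (s : ℕ) (j : Fin N) : ℕ :=
  s + ∑ l ∈ Finset.univ.filter (fun l : Fin N => l < π.symm j), c (π l)

/-- A no-idle/no-wait two-machine open shop schedule: each machine processes all jobs
contiguously in orders `π1`, `π2` from start times `s1`, `s2`, and for each job either
its M2 operation starts exactly when its M1 operation completes, or vice versa. -/
def OSSchedule (N : ℕ) (a b : Fin N → ℕ)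
    (π1 π2 : Fin N ≃ Fin N) (s1 s2 : ℕ) : Prop :=
  ∀ j : Fin N,
    startTime N b π2 s2 j = startTime N a π1 s1 j + a j ∨
    startTime N a π1 s1 j = startTime N b π2 s2 j + b j

open Finset

def stmt18T (m : ℕ) (i : Fin m) : Fin (3 * m) := ⟨2 * m + i.val, by omega⟩
def stmt18X (m : ℕ) (k : Fin m) : Fin (3 * m) := ⟨k.val, by omega⟩
def stmt18Y (m : ℕ) (k : Fin m) : Fin (3 * m) := ⟨m + k.val, by omega⟩

lemma stmt18T_val (m : ℕ) (i : Fin m) : (stmt18T m i).val = 2 * m + i.val := rfl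
lemma stmt18X_val (m : ℕ) (k : Fin m) : (stmt18X m k).val = k.val := rfl
lemma stmt18Y_val (m : ℕ) (k : Fin m) : (stmt18Y m k).val = m + k.val := rfl

lemma stmt18_a1 {m : ℕ} (t : Fin m → ℕ) (P : ℕ) (j : Fin (3 * m)) (h : (j : ℕ) < 2 * m) :
    osA m t P j = 1 := dif_pos h

lemma stmt18_aT {m : ℕ} (t : Fin m → ℕ) (P : ℕ) (i : Fin m) :
    osA m t P (stmt18T m i) = t i + 3 * P := by
  unfold osA stmt18T
  rw [dif_neg (by simp)]
  exact congrArg (· + 3 * P) (congrArg t (Fin.ext (by simp)))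

lemma stmt18_bX {m : ℕ} (sX sY : Fin m → ℕ) (P : ℕ) (k : Fin m) :
    osB m sX sY P (stmt18X m k) = sX k + P := by
  unfold osB stmt18X
  rw [dif_pos k.isLt]

lemma stmt18_bY {m : ℕ} (sX sY : Fin m → ℕ) (P : ℕ) (k : Fin m) :
    osB m sX sY P (stmt18Y m k) = sY k + 2 * P := by
  unfold osB stmt18Y
  rw [dif_neg (by simp), dif_pos (by simp [two_mul, k.isLt])]
  exact congrArg (· + 2 * P) (congrArg sY (Fin.ext (by simp)))

lemma stmt18_bx {m : ℕ} (sX sY : Fin m → ℕ) (P : ℕ) (j : Fin (3 * m)) (h : (j : ℕ) < m) :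
    osB m sX sY P j = sX ⟨(j : ℕ), h⟩ + P := dif_pos h

lemma stmt18_by {m : ℕ} (sX sY : Fin m → ℕ) (P : ℕ) (j : Fin (3 * m))
    (h1 : ¬ (j : ℕ) < m) (h2 : (j : ℕ) < 2 * m) :
    osB m sX sY P j = sY ⟨(j : ℕ) - m, by omega⟩ + 2 * P := by
  unfold osB
  rw [dif_neg h1, dif_pos h2]

lemma stmt18_b2 {m : ℕ} (sX sY : Fin m → ℕ) (P : ℕ) (j : Fin (3 * m))
    (h : ¬ (j : ℕ) < 2 * m) : osB m sX sY P j = 2 := by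
  unfold osB
  rw [dif_neg (by omega), dif_neg h]

lemma stmt18_pair {m : ℕ} (f : Fin m → ℕ) {k k' : Fin m} (h : k ≠ k') :
    f k + f k' ≤ ∑ i, f i := by
  have h1 := Finset.add_sum_erase univ f (mem_univ k)
  have h2 : f k' ≤ ∑ x ∈ univ.erase k, f x :=
    Finset.single_le_sum (fun _ _ => Nat.zero_le _)
      (Finset.mem_erase.mpr ⟨fun he => h he.symm, mem_univ _⟩)
  omega

lemma startTime_mono {N : ℕ} (c : Fin N → ℕ) (π : Fin N ≃ Fin N) (s : ℕ)
    {j j' : Fin N} (h : π.symm j < π.symm j') :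
    startTime N c π s j + c j ≤ startTime N c π s j' := by
  unfold startTime
  have hnot : π.symm j ∉ univ.filter (fun l : Fin N => l < π.symm j) := by simp
  have hins : insert (π.symm j) (univ.filter (fun l : Fin N => l < π.symm j))
      ⊆ univ.filter (fun l : Fin N => l < π.symm j') := by
    intro l hl
    simp only [mem_insert, mem_filter, mem_univ, true_and] at *
    rcases hl with rfl | hl
    · exact h
    · exact lt_trans hl h
  have h2 := Finset.sum_le_sum_of_subset (f := fun l => c (π l)) hins
  rw [Finset.sum_insert hnot, π.apply_symm_apply] at h2
  have h2' : c j + ∑ l ∈ univ.filter (fun l : Fin N => l < π.symm j), c (π l)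
      ≤ ∑ l ∈ univ.filter (fun l : Fin N => l < π.symm j'), c (π l) := by
    simpa using h2
  omega

lemma startTime_disjoint {N : ℕ} (c : Fin N → ℕ) (π : Fin N ≃ Fin N) (s : ℕ)
    {j j' : Fin N} (h : j ≠ j') :
    startTime N c π s j + c j ≤ startTime N c π s j' ∨
    startTime N c π s j' + c j' ≤ startTime N c π s j := by
  rcases lt_trichotomy (π.symm j) (π.symm j') with h1 | h1 | h1
  · exact Or.inl (startTime_mono c π s h1)
  · exact absurd (π.symm.injective h1) h
  · exact Or.inr (startTime_mono c π s h1)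

lemma startTime_le {N : ℕ} (c : Fin N → ℕ) (π : Fin N ≃ Fin N) (s : ℕ) (j : Fin N) :
    startTime N c π s j + c j ≤ s + ∑ x, c x := by
  unfold startTime
  have hnot : π.symm j ∉ univ.filter (fun l : Fin N => l < π.symm j) := by simp
  have h2 := Finset.sum_le_sum_of_subset (f := fun l => c (π l))
    (Finset.subset_univ (insert (π.symm j) (univ.filter (fun l : Fin N => l < π.symm j))))
  rw [Finset.sum_insert hnot, π.apply_symm_apply] at h2
  have h2' : c j + ∑ l ∈ univ.filter (fun l : Fin N => l < π.symm j), c (π l)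
      ≤ ∑ l : Fin N, c (π l) := by simpa using h2
  have h3 : ∑ l : Fin N, c (π l) = ∑ x, c x := Equiv.sum_comp π c
  omega

private lemma stmt18_exists_between (F : ℕ → ℕ) : ∀ (N : ℕ) (τ : ℕ), F 0 ≤ τ → τ < F N →
    ∃ n, n < N ∧ F n ≤ τ ∧ τ < F (n + 1) := by
  intro N
  induction N with
  | zero => intro τ h1 h2; omega
  | succ N ih =>
    intro τ h1 h2
    by_cases h : F N ≤ τ
    · exact ⟨N, by omega, h, h2⟩
    · obtain ⟨n, hn, ha, hb⟩ := ih τ h1 (by omega)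
      exact ⟨n, by omega, ha, hb⟩

private lemma sum_filter_lt_eq {N : ℕ} (g : Fin N → ℕ) :
    ∀ (k : ℕ), k ≤ N → ∑ l ∈ univ.filter (fun l : Fin N => l.val < k), g l
      = ∑ l ∈ range k, (if h : l < N then g ⟨l, h⟩ else 0) := by
  intro k
  induction k with
  | zero => intro _; simp
  | succ k ih =>
    intro hk
    rw [Finset.sum_range_succ, ← ih (by omega), dif_pos (by omega : k < N)]
    have : univ.filter (fun l : Fin N => l.val < k + 1)
        = insert (⟨k, by omega⟩ : Fin N) (univ.filter (fun l : Fin N => l.val < k)) := by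
      ext l
      simp only [mem_filter, mem_univ, true_and, mem_insert, Fin.ext_iff]
      omega
    rw [this, Finset.sum_insert (by simp)]
    ring

lemma startTime_cover {N : ℕ} (c : Fin N → ℕ) (π : Fin N ≃ Fin N) (s : ℕ) (τ : ℕ)
    (h1 : s ≤ τ) (h2 : τ < s + ∑ x, c x) :
    ∃ j, startTime N c π s j ≤ τ ∧ τ < startTime N c π s j + c j := by
  set F : ℕ → ℕ := fun n => s + ∑ l ∈ range n, (if h : l < N then c (π ⟨l, h⟩) else 0) with hF
  have hFN : τ < F N := by
    have e1 : ∑ l ∈ range N, (if h : l < N then c (π ⟨l, h⟩) else 0)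
        = ∑ l : Fin N, c (π l) := by
      rw [← Fin.sum_univ_eq_sum_range (fun l => if h : l < N then c (π ⟨l, h⟩) else 0) N]
      refine Finset.sum_congr rfl fun l _ => ?_
      rw [dif_pos l.isLt]
    have e2 : ∑ l : Fin N, c (π l) = ∑ x, c x := Equiv.sum_comp π c
    simp only [hF]
    omega
  obtain ⟨n, hn, ha, hb⟩ := stmt18_exists_between F N τ (by simpa [hF] using h1) hFN
  have hst : startTime N c π s (π ⟨n, hn⟩) = F n := by
    unfold startTime
    rw [Equiv.symm_apply_apply]
    have e3 : ∑ l ∈ univ.filter (fun l : Fin N => l < (⟨n, hn⟩ : Fin N)), c (π l)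
        = ∑ l ∈ range n, (if h : l < N then c (π ⟨l, h⟩) else 0) := by
      rw [← sum_filter_lt_eq (fun l => c (π l)) n (by omega)]
      rfl
    rw [e3]
  have hsucc : F (n + 1) = F n + c (π ⟨n, hn⟩) := by
    simp only [hF]
    rw [Finset.sum_range_succ, dif_pos hn]
    ring
  exact ⟨π ⟨n, hn⟩, by omega, by omega⟩

lemma startTime_unique {N : ℕ} (c : Fin N → ℕ) (π : Fin N ≃ Fin N) (s : ℕ) (τ : ℕ)
    {j j' : Fin N} (hj : startTime N c π s j ≤ τ ∧ τ < startTime N c π s j + c j)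
    (hj' : startTime N c π s j' ≤ τ ∧ τ < startTime N c π s j' + c j') : j = j' := by
  by_contra hne
  rcases startTime_disjoint c π s hne with h | h <;> omega

lemma stmt18_sumA (m : ℕ) (t : Fin m → ℕ) (P : ℕ) :
    ∑ j, osA m t P j = 2 * m + 3 * m * P + ∑ i, t i := by
  set t' : ℕ → ℕ := fun l => if h : l < m then t ⟨l, h⟩ else 0 with ht'
  set f : ℕ → ℕ := fun l => if l < 2 * m then 1 else t' (l - 2 * m) + 3 * P with hf
  have h1 : ∑ j, osA m t P j = ∑ l ∈ range (3 * m), f l := by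
    rw [← Fin.sum_univ_eq_sum_range f (3 * m)]
    refine Finset.sum_congr rfl fun j _ => ?_
    by_cases h : (j : ℕ) < 2 * m
    · simp [osA, f, h]
    · have hh : (j : ℕ) - 2 * m < m := by omega
      simp [osA, f, t', h, hh]
  have h2 : (3 : ℕ) * m = 2 * m + m := by ring
  rw [h1, h2, Finset.sum_range_add]
  have h3 : ∑ l ∈ range (2 * m), f l = 2 * m := by
    rw [Finset.sum_congr rfl (fun l hl => if_pos (mem_range.mp hl))]
    simp [mul_comm]
  have h4 : ∑ l ∈ range m, f (2 * m + l) = (∑ i, t i) + m * (3 * P) := by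
    have e : ∀ l ∈ range m, f (2 * m + l) = t' l + 3 * P := by
      intro l hl
      simp only [hf]
      rw [if_neg (by omega), show 2 * m + l - 2 * m = l from by omega]
    have e2 : ∑ l ∈ range m, t' l = ∑ i, t i := by
      rw [← Fin.sum_univ_eq_sum_range t' m]
      exact Finset.sum_congr rfl fun i _ => by simp [t']
    rw [Finset.sum_congr rfl e, Finset.sum_add_distrib, Finset.sum_const, card_range, e2,
      smul_eq_mul]
  rw [h3, h4]
  ring

lemma stmt18_sumB (m : ℕ) (sX sY t : Fin m → ℕ) (P : ℕ)
    (hsum : ∑ i, t i = ∑ i, sX i + ∑ i, sY i) :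
    ∑ j, osB m sX sY P j = 2 * m + 3 * m * P + ∑ i, t i := by
  set sX' : ℕ → ℕ := fun l => if h : l < m then sX ⟨l, h⟩ else 0 with hsX'
  set sY' : ℕ → ℕ := fun l => if h : l < m then sY ⟨l, h⟩ else 0 with hsY'
  set f : ℕ → ℕ := fun l => if l < m then sX' l + P
    else if l < 2 * m then sY' (l - m) + 2 * P else 2 with hf
  have h1 : ∑ j, osB m sX sY P j = ∑ l ∈ range (3 * m), f l := by
    rw [← Fin.sum_univ_eq_sum_range f (3 * m)]
    refine Finset.sum_congr rfl fun j _ => ?_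
    by_cases h : (j : ℕ) < m
    · simp [osB, f, sX', h]
    · by_cases h2 : (j : ℕ) < 2 * m
      · have hh : (j : ℕ) - m < m := by omega
        simp [osB, f, sY', h, h2, hh]
      · simp [osB, f, h, h2]
  have h2 : (3 : ℕ) * m = m + m + m := by ring
  rw [h1, h2, Finset.sum_range_add, Finset.sum_range_add]
  have hXe : ∑ l ∈ range m, sX' l = ∑ i, sX i := by
    rw [← Fin.sum_univ_eq_sum_range sX' m]
    exact Finset.sum_congr rfl fun i _ => by simp [sX']
  have hYe : ∑ l ∈ range m, sY' l = ∑ i, sY i := by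
    rw [← Fin.sum_univ_eq_sum_range sY' m]
    exact Finset.sum_congr rfl fun i _ => by simp [sY']
  have h3 : ∑ l ∈ range m, f l = (∑ i, sX i) + m * P := by
    have e : ∀ l ∈ range m, f l = sX' l + P := fun l hl => if_pos (mem_range.mp hl)
    rw [Finset.sum_congr rfl e, Finset.sum_add_distrib, Finset.sum_const, card_range, hXe,
      smul_eq_mul]
  have h4 : ∑ l ∈ range m, f (m + l) = (∑ i, sY i) + m * (2 * P) := by
    have e : ∀ l ∈ range m, f (m + l) = sY' l + 2 * P := by
      intro l hl
      simp only [hf]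
      rw [if_neg (by omega), if_pos (by have := mem_range.mp hl; omega),
        show m + l - m = l from by omega]
    rw [Finset.sum_congr rfl e, Finset.sum_add_distrib, Finset.sum_const, card_range, hYe,
      smul_eq_mul]
  have h5 : ∑ l ∈ range m, f (m + m + l) = m * 2 := by
    have e : ∀ l ∈ range m, f (m + m + l) = 2 := by
      intro l hl
      simp only [hf]
      rw [if_neg (by omega), if_neg (by omega)]
    rw [Finset.sum_congr rfl e, Finset.sum_const, card_range, smul_eq_mul]
  rw [h3, h4, h5, hsum]
  ring

/-- if the constructed two-machine open shop instance has a feasible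
no-idle/no-wait schedule with makespan at most `L + 1`, the NMTS instance
`(sX, sY, t)` has a solution. -/
theorem stmt_18 (m : ℕ) (hm : 1 ≤ m) (sX sY t : Fin m → ℕ)
    (hsX : ∀ i, 0 < sX i) (hsY : ∀ i, 0 < sY i) (ht : ∀ i, 0 < t i)
    (hsum : ∑ i, t i = ∑ i, sX i + ∑ i, sY i)
    (P L : ℕ) (hP : P = ∑ i, t i + ∑ i, sX i + ∑ i, sY i)
    (hL : L = 2 * m + 3 * m * P + ∑ i, t i)
    (hsched : ∃ (π1 π2 : Fin (3 * m) ≃ Fin (3 * m)) (s1 s2 : ℕ),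
      OSSchedule (3 * m) (osA m t P) (osB m sX sY P) π1 π2 s1 s2 ∧
      max (s1 + ∑ j, osA m t P j) (s2 + ∑ j, osB m sX sY P j) ≤ L + 1) :
    ∃ α β : Fin m ≃ Fin m, ∀ i, sX (α i) + sY (β i) = t i := by
  classical
  obtain ⟨π1, π2, s1, s2, hS, hmk⟩ := hsched
  set a : Fin (3 * m) → ℕ := osA m t P with ha
  set b : Fin (3 * m) → ℕ := osB m sX sY P with hb
  set SA : Fin (3 * m) → ℕ := startTime (3 * m) a π1 s1 with hSA
  set SB : Fin (3 * m) → ℕ := startTime (3 * m) b π2 s2 with hSB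
  have hNW : ∀ j, SB j = SA j + a j ∨ SA j = SB j + b j := hS
  set Q : ℕ := ∑ i, t i with hQ
  -- basic numeric facts
  have hXm : m ≤ ∑ i, sX i := by
    have h := Finset.sum_le_sum (fun i (_ : i ∈ univ) => (show 1 ≤ sX i from hsX i))
    simpa using h
  have hYm : m ≤ ∑ i, sY i := by
    have h := Finset.sum_le_sum (fun i (_ : i ∈ univ) => (show 1 ≤ sY i from hsY i))
    simpa using h
  have hQ2m : 2 * m ≤ Q := by omega
  have hPQQ : P = Q + Q := by omega
  have hP4 : 4 ≤ P := by omega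
  have ht_le : ∀ i, t i ≤ Q := fun i =>
    Finset.single_le_sum (fun _ _ => Nat.zero_le _) (mem_univ i)
  have hsX_le : ∀ k, sX k ≤ Q := fun k => by
    have := Finset.single_le_sum (f := sX) (fun _ _ => Nat.zero_le _) (mem_univ k)
    omega
  have hsY_le : ∀ k, sY k ≤ Q := fun k => by
    have := Finset.single_le_sum (f := sY) (fun _ _ => Nat.zero_le _) (mem_univ k)
    omega
  -- totals and machine start bounds
  have hTA : ∑ j, a j = L := by rw [ha, stmt18_sumA]; omega
  have hTB : ∑ j, b j = L := by rw [hb, stmt18_sumB m sX sY t P hsum]; omega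
  have hs1 : s1 ≤ 1 := by
    have h := le_trans (le_max_left _ _) hmk
    omega
  have hs2 : s2 ≤ 1 := by
    have h := le_trans (le_max_right _ _) hmk
    omega
  -- job data
  set T : Fin m → Fin (3 * m) := stmt18T m with hT
  have haj1 : ∀ j : Fin (3 * m), (j : ℕ) < 2 * m → a j = 1 := fun j h => by
    rw [ha]; exact stmt18_a1 t P j h
  have haT : ∀ i, a (T i) = t i + 3 * P := fun i => by
    rw [ha, hT]; exact stmt18_aT t P i
  have hbt : ∀ j : Fin (3 * m), ¬ (j : ℕ) < 2 * m → b j = 2 := fun j h => by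
    rw [hb]; exact stmt18_b2 sX sY P j h
  have hbT : ∀ i, b (T i) = 2 := fun i => by
    apply hbt; rw [hT]; simp [stmt18T]
  have hbub : ∀ j : Fin (3 * m), (j : ℕ) < 2 * m → b j ≤ 2 * P + Q := by
    intro j h
    by_cases h1 : (j : ℕ) < m
    · rw [hb, stmt18_bx sX sY P j h1]
      have := hsX_le ⟨(j : ℕ), h1⟩
      omega
    · rw [hb, stmt18_by sX sY P j h1 h]
      have := hsY_le ⟨(j : ℕ) - m, by omega⟩
      omega
  -- schedule structure lemmas
  have hdisj1 : ∀ (i : Fin m) (j : Fin (3 * m)), j ≠ T i →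
      SA j + a j ≤ SA (T i) ∨ SA (T i) + (t i + 3 * P) ≤ SA j := by
    intro i j h
    have hd := startTime_disjoint a π1 s1 h
    rw [← hSA, haT i] at hd
    exact hd
  have hdisj2 : ∀ (j j' : Fin (3 * m)), j ≠ j' →
      SB j + b j ≤ SB j' ∨ SB j' + b j' ≤ SB j := by
    intro j j' h
    have hd := startTime_disjoint b π2 s2 h
    rw [← hSB] at hd
    exact hd
  have hcov : ∀ τ, 1 ≤ τ → τ < L → ∃ j, SB j ≤ τ ∧ τ < SB j + b j := by
    intro τ h1 h2
    have h3 := startTime_cover b π2 s2 τ (by omega) (by rw [hTB]; omega)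
    rw [← hSB] at h3
    exact h3
  have huniq : ∀ (τ : ℕ) (j j' : Fin (3 * m)), SB j ≤ τ → τ < SB j + b j →
      SB j' ≤ τ → τ < SB j' + b j' → j = j' := by
    intro τ j j' h1 h2 h3 h4
    exact startTime_unique b π2 s2 τ ⟨by rw [← hSB]; omega, by rw [← hSB]; omega⟩
      ⟨by rw [← hSB]; omega, by rw [← hSB]; omega⟩
  have hAq : ∀ i, SA (T i) + (t i + 3 * P) ≤ L + 1 := by
    intro i
    have h := startTime_le a π1 s1 (T i)
    rw [← hSA, haT i, hTA] at h
    omega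
  have hTop : ∀ i, SB (T i) = SA (T i) + (t i + 3 * P) ∨ SA (T i) = SB (T i) + 2 := by
    intro i
    rcases hNW (T i) with h | h
    · left; rw [haT i] at h; exact h
    · right; rw [hbT i] at h; exact h
  -- Claim 2: an x/y job overlapping the interior of window i is boundary-type
  have claim2 : ∀ (i : Fin m) (j : Fin (3 * m)), (j : ℕ) < 2 * m → ∀ τ,
      SB j ≤ τ → τ < SB j + b j → SA (T i) + 1 ≤ τ → τ + 1 < SA (T i) + (t i + 3 * P) →
      (SB j ≤ SA (T i) ∧ SB j = SA j + 1) ∨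
      (SA (T i) + (t i + 3 * P) ≤ SB j + b j ∧ SA j = SB j + b j) := by
    intro i j hj τ h1 h2 h3 h4
    have hne : j ≠ T i := by
      intro h
      rw [h, hT] at hj
      simp [stmt18T] at hj
    have hd := hdisj1 i j hne
    have haj := haj1 j hj
    rcases hNW j with hc | hc
    · rw [haj] at hc
      refine Or.inl ⟨?_, hc⟩
      rcases hd with hd | hd <;> omega
    · refine Or.inr ⟨?_, hc⟩
      rcases hd with hd | hd <;> omega
  -- Claim 3: no t-op strictly inside a window
  have claim3 : ∀ (i : Fin m) (j : Fin (3 * m)), ¬ (j : ℕ) < 2 * m → j ≠ T i →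
      SA (T i) + 1 ≤ SB j → SB j + 3 ≤ SA (T i) + (t i + 3 * P) → False := by
    intro i j hj hne h1 h2
    have hbj : b j = 2 := hbt j hj
    have hd := hdisj1 i j hne
    rcases hNW j with hc | hc <;> rcases hd with hd | hd <;> omega
  -- basic window bounds used repeatedly
  have hti : ∀ i : Fin m, 1 ≤ t i := fun i => ht i
  -- left boundary op of each window
  have coverL : ∀ i : Fin m, ∃ j : Fin (3 * m), (j : ℕ) < 2 * m ∧ SB j ≤ SA (T i) ∧
      SA (T i) + 2 ≤ SB j + b j ∧ SB j = SA j + 1 := by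
    intro i
    have hAqi := hAq i
    have htii := hti i
    obtain ⟨j, hj1, hj2⟩ := hcov (SA (T i) + 1) (by omega) (by omega)
    by_cases hx : (j : ℕ) < 2 * m
    · rcases claim2 i j hx (SA (T i) + 1) hj1 hj2 (le_refl _) (by omega) with
        ⟨h1, h2⟩ | ⟨h1, h2⟩
      · exact ⟨j, hx, h1, by omega, h2⟩
      · exfalso
        have := hbub j hx
        omega
    · exfalso
      have hbj : b j = 2 := hbt j hx
      by_cases hji : j = T i
      · rw [hji] at hj1 hj2 hbj
        rcases hTop i with h | h <;> omega
      · have hrange : SB j = SA (T i) ∨ SB j = SA (T i) + 1 := by omega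
        rcases hrange with h | h
        · -- t-op at [A, A+2); examine the op covering A+2
          obtain ⟨j2, hj21, hj22⟩ := hcov (SA (T i) + 2) (by omega) (by omega)
          have hne2 : j2 ≠ j := by
            intro he
            rw [he] at hj21 hj22
            omega
          have hd2 := hdisj2 j2 j hne2
          have hSBj2 : SB j2 = SA (T i) + 2 := by
            rcases hd2 with hd | hd <;> omega
          by_cases hx2 : (j2 : ℕ) < 2 * m
          · rcases claim2 i j2 hx2 (SA (T i) + 2) hj21 hj22 (by omega) (by omega) with
              ⟨h1, h2⟩ | ⟨h1, h2⟩
            · omega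
            · have := hbub j2 hx2
              omega
          · by_cases hji2 : j2 = T i
            · have hb2 : b j2 = 2 := hbt j2 hx2
              rw [hji2] at hj21 hj22 hb2
              rcases hTop i with hh | hh <;> omega
            · exact claim3 i j2 hx2 hji2 (by omega) (by omega)
        · exact claim3 i j hx hji (by omega) (by omega)
  -- right boundary op of each window
  have coverR : ∀ i : Fin m, ∃ j : Fin (3 * m), (j : ℕ) < 2 * m ∧
      SB j + 2 ≤ SA (T i) + (t i + 3 * P) ∧
      SA (T i) + (t i + 3 * P) ≤ SB j + b j ∧ SA j = SB j + b j := by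
    intro i
    have hAqi := hAq i
    have htii := hti i
    obtain ⟨j, hj1, hj2⟩ := hcov (SA (T i) + (t i + 3 * P) - 2) (by omega) (by omega)
    by_cases hx : (j : ℕ) < 2 * m
    · rcases claim2 i j hx (SA (T i) + (t i + 3 * P) - 2) hj1 hj2 (by omega) (by omega) with
        ⟨h1, h2⟩ | ⟨h1, h2⟩
      · exfalso
        have := hbub j hx
        omega
      · exact ⟨j, hx, by omega, h1, h2⟩
    · exfalso
      have hbj : b j = 2 := hbt j hx
      by_cases hji : j = T i
      · rw [hji] at hj1 hj2 hbj
        rcases hTop i with h | h <;> omega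
      · have hrange : SB j + 3 = SA (T i) + (t i + 3 * P) ∨
            SB j + 2 = SA (T i) + (t i + 3 * P) := by omega
        rcases hrange with h | h
        · exact claim3 i j hx hji (by omega) (by omega)
        · -- t-op at [A+q-2, A+q); examine the op covering A+q-3
          obtain ⟨j2, hj21, hj22⟩ := hcov (SA (T i) + (t i + 3 * P) - 3) (by omega) (by omega)
          have hne2 : j2 ≠ j := by
            intro he
            rw [he] at hj21
            omega
          have hd2 := hdisj2 j2 j hne2
          have hend : SB j2 + b j2 = SA (T i) + (t i + 3 * P) - 2 := by
            rcases hd2 with hd | hd <;> omega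
          by_cases hx2 : (j2 : ℕ) < 2 * m
          · rcases claim2 i j2 hx2 (SA (T i) + (t i + 3 * P) - 3) hj21 hj22 (by omega)
              (by omega) with ⟨h1, h2⟩ | ⟨h1, h2⟩
            · have := hbub j2 hx2
              omega
            · omega
          · by_cases hji2 : j2 = T i
            · have hb2 : b j2 = 2 := hbt j2 hx2
              rw [hji2] at hj21 hj22 hb2 hend
              rcases hTop i with hh | hh <;> omega
            · have hb2 : b j2 = 2 := hbt j2 hx2
              exact claim3 i j2 hx2 hji2 (by omega) (by omega)
  choose oL hL1 hL2 hL3 hL4 using coverL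
  choose oR hR1 hR2 hR3 hR4 using coverR
  -- a left op is never a right op
  have hLR : ∀ i i', oL i ≠ oR i' := by
    intro i i' he
    have h1 := hL4 i
    have h2 := hR4 i'
    rw [he] at h1
    omega
  -- adjacency: the two boundary ops of window i together cover it
  have key : ∀ i, t i + 3 * P ≤ b (oL i) + b (oR i) := by
    intro i
    have hne := hLR i i
    have hd := hdisj2 (oL i) (oR i) hne
    have hL2i := hL2 i
    have hL3i := hL3 i
    have hR2i := hR2 i
    have hR3i := hR3 i
    have htii := hti i
    have hAqi := hAq i
    have hstart : SB (oL i) + b (oL i) ≤ SB (oR i) := by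
      rcases hd with hd | hd <;> omega
    by_cases hc : SB (oL i) + b (oL i) = SB (oR i)
    · omega
    · exfalso
      obtain ⟨j3, h31, h32⟩ := hcov (SB (oL i) + b (oL i)) (by omega) (by omega)
      have hneL : j3 ≠ oL i := by
        intro he
        rw [he] at h32
        omega
      have hneR : j3 ≠ oR i := by
        intro he
        rw [he] at h31
        omega
      by_cases hx3 : (j3 : ℕ) < 2 * m
      · rcases claim2 i j3 hx3 (SB (oL i) + b (oL i)) h31 h32 (by omega) (by omega) with
          ⟨h1, h2⟩ | ⟨h1, h2⟩
        · exact hneL (huniq (SA (T i) + 1) j3 (oL i) (by omega) (by omega)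
            (by omega) (by omega))
        · exact hneR (huniq (SA (T i) + (t i + 3 * P) - 2) j3 (oR i) (by omega) (by omega)
            (by omega) (by omega))
      · have hb3 : b j3 = 2 := hbt j3 hx3
        by_cases hji3 : j3 = T i
        · rw [hji3] at h31 h32 hb3
          rcases hTop i with hh | hh <;> omega
        · exact claim3 i j3 hx3 hji3 (by omega) (by omega)
  -- a window cannot have two x-type boundary ops
  have hbothx : ∀ i, ¬ ((oL i : ℕ) < m ∧ (oR i : ℕ) < m) := by
    rintro i ⟨h1, h2⟩
    have hk := key i
    have e1 : b (oL i) = sX ⟨(oL i : ℕ), h1⟩ + P := by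
      rw [hb]; exact stmt18_bx sX sY P _ h1
    have e2 : b (oR i) = sX ⟨(oR i : ℕ), h2⟩ + P := by
      rw [hb]; exact stmt18_bx sX sY P _ h2
    have hne : (⟨(oL i : ℕ), h1⟩ : Fin m) ≠ ⟨(oR i : ℕ), h2⟩ := by
      intro he
      have hv := congrArg Fin.val he
      exact hLR i i (Fin.ext hv)
    have hp := stmt18_pair sX hne
    have htii := hti i
    omega
  -- injectivity of the boundary-op assignments
  have hTinj : ∀ i i' : Fin m, T i = T i' → i = i' := by
    intro i i' h
    have := congrArg Fin.val h
    rw [hT] at this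
    simp [stmt18T] at this
    exact Fin.ext this
  have hLinj : Function.Injective oL := by
    intro i i' he
    by_contra hne
    have hTne : T i ≠ T i' := fun h => hne (hTinj i i' h)
    have hd := hdisj1 i' (T i) hTne
    rw [haT i] at hd
    have hL2i := hL2 i
    have hL3i := hL3 i
    have hL2i' := hL2 i'
    have hL3i' := hL3 i'
    rw [← he] at hL2i' hL3i'
    have hbu := hbub (oL i) (hL1 i)
    have htii := hti i
    have htii' := hti i'
    rcases hd with hd | hd <;> omega
  have hRinj : Function.Injective oR := by
    intro i i' he
    by_contra hne
    have hTne : T i ≠ T i' := fun h => hne (hTinj i i' h)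
    have hd := hdisj1 i' (T i) hTne
    rw [haT i] at hd
    have hR2i := hR2 i
    have hR3i := hR3 i
    have hR2i' := hR2 i'
    have hR3i' := hR3 i'
    rw [← he] at hR2i' hR3i'
    have hbu := hbub (oR i) (hR1 i)
    have htii := hti i
    have htii' := hti i'
    rcases hd with hd | hd <;> omega
  -- the boundary ops biject onto the x- and y-jobs
  have hFlt : ∀ p : Fin m ⊕ Fin m, ((Sum.elim oL oR p : Fin (3 * m)) : ℕ) < 2 * m := by
    rintro (i | i)
    exacts [hL1 i, hR1 i]
  set G : Fin m ⊕ Fin m → Fin (2 * m) := fun p => ⟨(Sum.elim oL oR p : Fin (3 * m)), hFlt p⟩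
    with hG
  have hGinj : Function.Injective G := by
    rintro (i | i) (k | k) h <;>
      (have hv : (Sum.elim oL oR (Sum.inl i) : Fin (3*m)) = (Sum.elim oL oR (Sum.inl i) : Fin (3*m)) := rfl) <;>
      have h' := congrArg Fin.val h <;> simp [hG] at h'
    · exact congrArg Sum.inl (hLinj (Fin.ext h'))
    · exact absurd (Fin.ext h') (hLR i k)
    · exact absurd (Fin.ext h').symm (hLR k i)
    · exact congrArg Sum.inr (hRinj (Fin.ext h'))
  have hGbij : Function.Bijective G :=
    (Fintype.bijective_iff_injective_and_card G).mpr ⟨hGinj, by simp [two_mul]⟩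
  -- every x-job and y-job is a boundary op of some window
  have hxhit : ∀ k : Fin m, ∃ i, oL i = stmt18X m k ∨ oR i = stmt18X m k := by
    intro k
    obtain ⟨p, hp⟩ := hGbij.2 ⟨k.val, by omega⟩
    have hp' := congrArg Fin.val hp
    cases p with
    | inl i => exact ⟨i, Or.inl (Fin.ext (by simpa [hG, stmt18X] using hp'))⟩
    | inr i => exact ⟨i, Or.inr (Fin.ext (by simpa [hG, stmt18X] using hp'))⟩
  have hyhit : ∀ k : Fin m, ∃ i, oL i = stmt18Y m k ∨ oR i = stmt18Y m k := by
    intro k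
    obtain ⟨p, hp⟩ := hGbij.2 ⟨m + k.val, by omega⟩
    have hp' := congrArg Fin.val hp
    cases p with
    | inl i => exact ⟨i, Or.inl (Fin.ext (by simpa [hG, stmt18Y] using hp'))⟩
    | inr i => exact ⟨i, Or.inr (Fin.ext (by simpa [hG, stmt18Y] using hp'))⟩
  choose u hu using hxhit
  choose v hv using hyhit
  have huinj : Function.Injective u := by
    intro k k' he
    have h1 := hu k
    have h2 := hu k'
    rw [he] at h1
    rcases h1 with h1 | h1 <;> rcases h2 with h2 | h2
    · rw [h1] at h2
      have := congrArg Fin.val h2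
      exact Fin.ext (by simpa [stmt18X] using this)
    · exact absurd ⟨by rw [h1]; exact k.isLt, by rw [h2]; exact k'.isLt⟩ (hbothx (u k'))
    · exact absurd ⟨by rw [h2]; exact k'.isLt, by rw [h1]; exact k.isLt⟩ (hbothx (u k'))
    · rw [h1] at h2
      have := congrArg Fin.val h2
      exact Fin.ext (by simpa [stmt18X] using this)
  have hubij : Function.Bijective u := Finite.injective_iff_bijective.mp huinj
  have hxwin : ∀ i, ∃ k, oL i = stmt18X m k ∨ oR i = stmt18X m k := by
    intro i
    obtain ⟨k, hk⟩ := hubij.2 i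
    exact ⟨k, hk ▸ hu k⟩
  have hvinj : Function.Injective v := by
    intro k k' he
    have h1 := hv k
    have h2 := hv k'
    rw [he] at h1
    obtain ⟨k'', hk''⟩ := hxwin (v k')
    rcases h1 with h1 | h1 <;> rcases h2 with h2 | h2
    · rw [h1] at h2
      have := congrArg Fin.val h2
      exact Fin.ext (by simpa [stmt18Y] using this)
    · exfalso
      rcases hk'' with h3 | h3
      · rw [h1] at h3
        have := congrArg Fin.val h3
        simp [stmt18X, stmt18Y] at this
        have := k''.isLt
        omega
      · rw [h2] at h3
        have := congrArg Fin.val h3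
        simp [stmt18X, stmt18Y] at this
        have := k''.isLt
        omega
    · exfalso
      rcases hk'' with h3 | h3
      · rw [h2] at h3
        have := congrArg Fin.val h3
        simp [stmt18X, stmt18Y] at this
        have := k''.isLt
        omega
      · rw [h1] at h3
        have := congrArg Fin.val h3
        simp [stmt18X, stmt18Y] at this
        have := k''.isLt
        omega
    · rw [h1] at h2
      have := congrArg Fin.val h2
      exact Fin.ext (by simpa [stmt18Y] using this)
  have hvbij : Function.Bijective v := Finite.injective_iff_bijective.mp hvinj
  set α : Fin m ≃ Fin m := (Equiv.ofBijective u hubij).symm with hα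
  set β : Fin m ≃ Fin m := (Equiv.ofBijective v hvbij).symm with hβ
  have hmain : ∀ i, t i ≤ sX (α i) + sY (β i) := by
    intro i
    have hk : u (α i) = i := (Equiv.ofBijective u hubij).apply_symm_apply i
    have hk' : v (β i) = i := (Equiv.ofBijective v hvbij).apply_symm_apply i
    have h1 := hu (α i)
    have h2 := hv (β i)
    rw [hk] at h1
    rw [hk'] at h2
    have hbX : b (stmt18X m (α i)) = sX (α i) + P := by
      rw [hb]; exact stmt18_bX sX sY P _
    have hbY : b (stmt18Y m (β i)) = sY (β i) + 2 * P := by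
      rw [hb]; exact stmt18_bY sX sY P _
    have hkey := key i
    rcases h1 with h1 | h1 <;> rcases h2 with h2 | h2
    · exfalso
      rw [h1] at h2
      have h3 := congrArg Fin.val h2
      simp [stmt18X, stmt18Y] at h3
      have := (α i).isLt
      omega
    · rw [h1, h2, hbX, hbY] at hkey
      omega
    · rw [h1, h2, hbY, hbX] at hkey
      omega
    · exfalso
      rw [h1] at h2
      have h3 := congrArg Fin.val h2
      simp [stmt18X, stmt18Y] at h3
      have := (α i).isLt
      omega
  have hsum2 : ∑ i, t i = ∑ i, (sX (α i) + sY (β i)) := by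
    rw [Finset.sum_add_distrib, Equiv.sum_comp α sX, Equiv.sum_comp β sY]
    exact hsum
  have hfin := (Finset.sum_eq_sum_iff_of_le (fun i _ => hmain i)).mp hsum2
  exact ⟨α, β, fun i => (hfin i (mem_univ i)).symm⟩
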